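/- Let λ be a nonzero normalized complex number and let m ≤ p be positive integers. The space of complex s(λ,m)×s(λ,p) matrices X satisfying X·conj(M_{λ,p})·M_{λ,p} = conj(M_{λ,m})·M_{λ,m}·X is a ℂ-vector space whose dimension equals: m if λ is a positive real number; 2m if λ² ∉ ℝ; and 4m if λ² is a negative real number. -/

import Mathlib

open Matrix

noncomputable section

open scoped Classical

/-- The `m × m` upper-triangular Jordan block `J_{λ,m}` with eigenvalue `λ`. -/
def Jb (l : ℂ) (m : ℕ) : Matrix (Fin m) (Fin m) ℂ :=
  Matrix.of fun i j =>
    if (j : ℕ) = (i : ℕ) then l else if (j : ℕ) = (i : ℕ) + 1 then 1 else 0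

/-- The `m × m` anti-diagonal matrix `S_m` ( `(i,j)` entry is `1` iff `i + j = m + 1`,
1-based). -/
def Sb (m : ℕ) : Matrix (Fin m) (Fin m) ℂ :=
  Matrix.of fun i j => if (i : ℕ) + (j : ℕ) + 1 = m then 1 else 0

/-- The size `s(λ,m)` of the matrix `M_{λ,m}`: `m` if `λ ∈ ℝ`, and `2m` otherwise. -/
def sz (l : ℂ) (m : ℕ) : ℕ := if l.im = 0 then m else 2 * m

/-- The matrix `M_{λ,m}`: the Jordan block `J_{λ,m}` if `λ ∈ ℝ`, and the block matrix
`[[0, J_{λ²,m}], [I, 0]]` otherwise. -/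
def Mb (l : ℂ) (m : ℕ) : Matrix (Fin (sz l m)) (Fin (sz l m)) ℂ :=
  Matrix.of fun i j =>
    if l.im = 0 then
      (if (j : ℕ) = (i : ℕ) then l else if (j : ℕ) = (i : ℕ) + 1 then 1 else 0)
    else if (i : ℕ) < m ∧ m ≤ (j : ℕ) then
      (if (j : ℕ) - m = (i : ℕ) then l ^ 2
       else if (j : ℕ) - m = (i : ℕ) + 1 then 1 else 0)
    else if m ≤ (i : ℕ) ∧ (i : ℕ) - m = (j : ℕ) then 1 else 0

/-- The matrix `N_{λ,m}`: `S_m` if `λ ∈ ℝ` and `S_{2m}` otherwise. -/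
def Nb (l : ℂ) (m : ℕ) : Matrix (Fin (sz l m)) (Fin (sz l m)) ℂ := Sb (sz l m)

/-- A complex number is normalized if `Re λ ≥ 0` and, when `Re λ = 0`, also `Im λ ≥ 0`. -/
def Normalized (l : ℂ) : Prop := 0 ≤ l.re ∧ (l.re = 0 → 0 ≤ l.im)

/-- The linear map `B ↦ B * X + X * Bᵀ`. -/
def rmap {n : Type*} [Fintype n] (X : Matrix n n ℂ) :
    Matrix n n ℂ →ₗ[ℂ] Matrix n n ℂ where
  toFun B := B * X + X * Bᵀ
  map_add' B C := by
    simp only [Matrix.add_mul, Matrix.mul_add, Matrix.transpose_add]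
    abel
  map_smul' c B := by
    simp only [Matrix.smul_mul, Matrix.mul_smul, Matrix.transpose_smul, smul_add,
      RingHom.id_apply]

/-- The linear map `B ↦ Bᵀ * Y + Y * B`. -/
def lmap {n : Type*} [Fintype n] (Y : Matrix n n ℂ) :
    Matrix n n ℂ →ₗ[ℂ] Matrix n n ℂ where
  toFun B := Bᵀ * Y + Y * B
  map_add' B C := by
    simp only [Matrix.add_mul, Matrix.mul_add, Matrix.transpose_add]
    abel
  map_smul' c B := by
    simp only [Matrix.smul_mul, Matrix.mul_smul, Matrix.transpose_smul, smul_add,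
      RingHom.id_apply]

/-- The subspace `𝒜°` associated with `(H, A)`:  matrices `B` with
`B·A·H⁻¹ + A·H⁻¹·Bᵀ = 0` and `Bᵀ·H·conj(A) + H·conj(A)·B = 0`. -/
def scriptAo {n : Type*} [Fintype n] [DecidableEq n] (H A : Matrix n n ℂ) :
    Submodule ℂ (Matrix n n ℂ) :=
  LinearMap.ker (rmap (A * H⁻¹)) ⊓ LinearMap.ker (lmap (H * A.map (starRingEnd ℂ)))

/-- The subspace `𝒜` associated with `(H, A)`:  matrices `B` with
`B·A·H⁻¹ + A·H⁻¹·Bᵀ ∈ ℂ·(A·H⁻¹)` and `Bᵀ·H·conj(A) + H·conj(A)·B ∈ ℂ·(H·conj(A))`. -/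
def scriptA {n : Type*} [Fintype n] [DecidableEq n] (H A : Matrix n n ℂ) :
    Submodule ℂ (Matrix n n ℂ) :=
  Submodule.comap (rmap (A * H⁻¹)) (Submodule.span ℂ {A * H⁻¹}) ⊓
    Submodule.comap (lmap (H * A.map (starRingEnd ℂ)))
      (Submodule.span ℂ {H * A.map (starRingEnd ℂ)})

/-- The linear map `X ↦ X·C₂ − C₁·X` on rectangular matrices. -/
def interMap {a b : Type*} [Fintype a] [Fintype b]
    (C1 : Matrix a a ℂ) (C2 : Matrix b b ℂ) :
    Matrix a b ℂ →ₗ[ℂ] Matrix a b ℂ where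
  toFun X := X * C2 - C1 * X
  map_add' X Y := by
    simp only [Matrix.add_mul, Matrix.mul_add]
    abel
  map_smul' c X := by
    simp only [Matrix.smul_mul, Matrix.mul_smul, smul_sub, RingHom.id_apply]

lemma shift_apply {n : ℕ} (i j : Fin n) :
    Jb 0 n i j = if (j : ℕ) = (i : ℕ) + 1 then 1 else 0 := by
  simp only [Jb, Matrix.of_apply]
  split_ifs with h1 h2 <;> simp_all <;> omega

-- entry lemmas for multiplication by the shift T_n = Jb 0 n
lemma mul_shift_apply {m p : ℕ} (X : Matrix (Fin m) (Fin p) ℂ) (i : Fin m) (j : Fin p) :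
    (X * Jb 0 p) i j = if h : 1 ≤ (j : ℕ) then X i ⟨(j : ℕ) - 1, by omega⟩ else 0 := by
  rw [Matrix.mul_apply]
  split_ifs with h
  · rw [Finset.sum_eq_single (⟨(j:ℕ)-1, by omega⟩ : Fin p)]
    · rw [shift_apply, if_pos (by simp; omega), mul_one]
    · intro t _ ht
      rw [shift_apply, if_neg ?_, mul_zero]
      intro hc
      exact ht (by apply Fin.ext; simp only [Fin.val_mk]; omega)
    · simp
  · apply Finset.sum_eq_zero
    intro t _
    rw [shift_apply, if_neg (by omega), mul_zero]

lemma shift_mul_apply {m p : ℕ} (X : Matrix (Fin m) (Fin p) ℂ) (i : Fin m) (j : Fin p) :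
    (Jb 0 m * X) i j = if h : (i : ℕ) + 1 < m then X ⟨(i : ℕ) + 1, h⟩ j else 0 := by
  rw [Matrix.mul_apply]
  split_ifs with h
  · rw [Finset.sum_eq_single (⟨(i:ℕ)+1, h⟩ : Fin m)]
    · rw [shift_apply, if_pos (by simp), one_mul]
    · intro t _ ht
      rw [shift_apply, if_neg ?_, zero_mul]
      intro hc
      exact ht (by apply Fin.ext; simp only [Fin.val_mk]; omega)
    · simp
  · apply Finset.sum_eq_zero
    intro t _
    rw [shift_apply, if_neg ?_, zero_mul]
    intro hc
    omega

lemma ker_inter_mem {a b : Type*} [Fintype a] [Fintype b]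
    (C1 : Matrix a a ℂ) (C2 : Matrix b b ℂ) (X : Matrix a b ℂ) :
    X ∈ LinearMap.ker (interMap C1 C2) ↔ X * C2 = C1 * X := by
  rw [LinearMap.mem_ker]
  constructor
  · intro h; exact sub_eq_zero.mp h
  · intro h; show X * C2 - C1 * X = 0; rw [h, sub_self]

lemma core_finrank (m p : ℕ) (hm : 0 < m) (hmp : m ≤ p) :
    Module.finrank ℂ ↥(LinearMap.ker (interMap (Jb 0 m) (Jb 0 p))) = m := by
  have hp : 0 < p := lt_of_lt_of_le hm hmp
  set K := LinearMap.ker (interMap (Jb 0 m) (Jb 0 p)) with hK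
  let φ : K →ₗ[ℂ] (Fin m → ℂ) :=
    { toFun := fun X i => X.1 i ⟨p - 1, by omega⟩
      map_add' := fun X Y => rfl
      map_smul' := fun c X => rfl }
  have heq : ∀ X : Matrix (Fin m) (Fin p) ℂ, X ∈ K →
      ∀ (i : Fin m) (j : Fin p),
        (if _ : 1 ≤ (j : ℕ) then X i ⟨(j : ℕ) - 1, by omega⟩ else 0)
          = (if h : (i : ℕ) + 1 < m then X ⟨(i : ℕ) + 1, h⟩ j else 0) := by
    intro X hX i j
    rw [ker_inter_mem] at hX
    rw [← mul_shift_apply, ← shift_mul_apply, hX]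
  have rel1 : ∀ X ∈ K, ∀ (i : Fin m) (j : Fin p),
      (hi : (i:ℕ) + 1 < m) → (hj : (j:ℕ) + 1 < p) →
      X i j = X ⟨(i:ℕ)+1, hi⟩ ⟨(j:ℕ)+1, hj⟩ := by
    intro X hX i j hi hj
    have h := heq X hX i ⟨(j:ℕ)+1, by omega⟩
    rw [dif_pos (by simp), dif_pos hi] at h
    simpa using h
  have rel2 : ∀ X ∈ K, ∀ j : Fin p, (j:ℕ)+1 < p → X ⟨m-1, by omega⟩ j = 0 := by
    intro X hX j hj
    have h := heq X hX ⟨m-1, by omega⟩ ⟨(j:ℕ)+1, by omega⟩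
    rw [dif_pos (by simp), dif_neg (by first | omega | (simp only [Fin.val_mk]; omega))] at h
    simpa using h
  have hinj : ∀ X : Matrix (Fin m) (Fin p) ℂ, X ∈ K →
      (∀ i : Fin m, X i ⟨p-1, by omega⟩ = 0) → X = 0 := by
    intro X hX hcol
    have key : ∀ k : ℕ, ∀ (i : Fin m) (j : Fin p), m - 1 - (i:ℕ) ≤ k → X i j = 0 := by
      intro k
      induction k with
      | zero =>
        intro i j hik
        by_cases hj : (j:ℕ) = p - 1
        · have hje : j = ⟨p-1, by omega⟩ := Fin.ext (by simp [hj])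
          rw [hje]; exact hcol i
        · have hie : i = ⟨m-1, by omega⟩ := Fin.ext (by have := i.isLt; simp; omega)
          rw [hie]; exact rel2 X hX j (by have := j.isLt; omega)
      | succ k ih =>
        intro i j hik
        by_cases hik' : m - 1 - (i:ℕ) ≤ k
        · exact ih i j hik'
        · have hi : (i:ℕ) + 1 < m := by have := i.isLt; omega
          by_cases hj : (j:ℕ) + 1 < p
          · rw [rel1 X hX i j hi hj]
            exact ih _ _ (by first | omega | (simp only [Fin.val_mk]; omega))
          · have hje : j = ⟨p-1, by omega⟩ := Fin.ext (by have := j.isLt; simp; omega)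
            rw [hje]; exact hcol i
    ext i j
    exact key (m-1) i j (by omega)
  have hsurj : ∀ c : Fin m → ℂ, ∃ X ∈ K, (∀ i, X i ⟨p-1, by omega⟩ = c i) := by
    intro c
    refine ⟨Matrix.of fun i j =>
      if _ : (i:ℕ) + p ≤ (j:ℕ) + m then
        c ⟨(i:ℕ) + p - 1 - (j:ℕ), by have := i.isLt; have := j.isLt; omega⟩
      else 0, ?_, ?_⟩
    · rw [ker_inter_mem]
      ext i j
      rw [mul_shift_apply, shift_mul_apply]
      simp only [Matrix.of_apply]
      have hi := i.isLt
      have hj := j.isLt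
      split_ifs with h1 h2 h3 h4 h5 h6 h7 h8 <;>
        first
          | rfl
          | (exfalso; simp only [Fin.val_mk] at *; omega)
          | (congr 1; apply Fin.ext; simp only [Fin.val_mk] at *; omega)
          | (exfalso; omega)
    · intro i
      simp only [Matrix.of_apply]
      have hi := i.isLt
      rw [dif_pos (by first | omega | (simp only [Fin.val_mk]; omega))]
      congr 1
      apply Fin.ext
      first | omega | (simp only [Fin.val_mk]; omega)
  have hbij : Function.Bijective φ := by
    constructor
    · intro X Y hXY
      apply Subtype.ext
      have hmem : (X:Matrix (Fin m) (Fin p) ℂ) - Y ∈ K := sub_mem X.2 Y.2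
      have h0 := hinj _ hmem (fun i => by
        have h := congrFun hXY i
        simp only [φ, LinearMap.coe_mk, AddHom.coe_mk] at h
        simp [Matrix.sub_apply]; exact sub_eq_zero.mpr h)
      exact sub_eq_zero.mp h0
    · intro c
      obtain ⟨X, hX, hXc⟩ := hsurj c
      exact ⟨⟨X, hX⟩, funext fun i => hXc i⟩
  rw [LinearEquiv.finrank_eq (LinearEquiv.ofBijective φ hbij),
    Module.finrank_fin_fun]

lemma shift_pow_apply {n : ℕ} (k : ℕ) (i j : Fin n) :
    (Jb 0 n ^ k) i j = if (j:ℕ) = (i:ℕ) + k then 1 else 0 := by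
  induction k generalizing j with
  | zero =>
    rw [pow_zero, Matrix.one_apply]
    by_cases h : i = j
    · rw [if_pos h, if_pos (by omega)]
    · rw [if_neg h, if_neg (by intro hc; exact h (Fin.ext (by omega)))]
  | succ k ih =>
    rw [pow_succ, mul_shift_apply]
    split_ifs with h1 h2 h3
    · rw [ih, if_pos (by simp only [Fin.val_mk]; omega)]
    · rw [ih, if_neg (by simp only [Fin.val_mk]; omega)]
    · omega
    · rfl

lemma shift_pow_eq_zero {n : ℕ} {k : ℕ} (h : n ≤ k) : (Jb 0 n : Matrix _ _ ℂ) ^ k = 0 := by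
  ext i j
  rw [shift_pow_apply, if_neg (by have := j.isLt; omega)]
  rfl

lemma Jb_eq_smul_one_add {n : ℕ} (l : ℂ) :
    Jb l n = l • (1 : Matrix (Fin n) (Fin n) ℂ) + Jb 0 n := by
  ext i j
  simp only [Jb, Matrix.add_apply, Matrix.smul_apply, Matrix.one_apply, Matrix.of_apply,
    smul_eq_mul]
  by_cases h : (j:ℕ) = (i:ℕ)
  · rw [if_pos h, if_pos h, if_pos (Fin.ext h.symm)]
    ring
  · rw [if_neg h, if_neg h, if_neg (show ¬ i = j from fun hc => h (by rw [hc]))]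
    ring

lemma interMap_smul_one_add {a b : Type*} [Fintype a] [DecidableEq a] [Fintype b] [DecidableEq b]
    (l : ℂ) (C1 : Matrix a a ℂ) (C2 : Matrix b b ℂ) :
    interMap (l • 1 + C1) (l • 1 + C2) = interMap C1 C2 := by
  apply LinearMap.ext
  intro X
  show X * (l • 1 + C2) - (l • 1 + C1) * X = X * C2 - C1 * X
  simp only [Matrix.mul_add, Matrix.add_mul, Matrix.mul_smul, Matrix.smul_mul,
    Matrix.mul_one, Matrix.one_mul]
  abel

lemma jordan_finrank (l : ℂ) (m p : ℕ) (hm : 0 < m) (hmp : m ≤ p) :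
    Module.finrank ℂ ↥(LinearMap.ker (interMap (Jb l m) (Jb l p))) = m := by
  rw [Jb_eq_smul_one_add l, Jb_eq_smul_one_add l, interMap_smul_one_add]
  exact core_finrank m p hm hmp

def lmulMap {n q : ℕ} (A : Matrix (Fin n) (Fin n) ℂ) :
    Matrix (Fin n) (Fin q) ℂ →ₗ[ℂ] Matrix (Fin n) (Fin q) ℂ where
  toFun X := A * X
  map_add' := Matrix.mul_add A
  map_smul' c X := Matrix.mul_smul A c X

def rmulMap {n q : ℕ} (B : Matrix (Fin q) (Fin q) ℂ) :
    Matrix (Fin n) (Fin q) ℂ →ₗ[ℂ] Matrix (Fin n) (Fin q) ℂ where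
  toFun X := X * B
  map_add' X Y := Matrix.add_mul X Y B
  map_smul' c X := Matrix.smul_mul c X B

lemma lmulMap_pow {n q : ℕ} (A : Matrix (Fin n) (Fin n) ℂ) (k : ℕ) :
    (lmulMap A : Module.End ℂ (Matrix (Fin n) (Fin q) ℂ)) ^ k = lmulMap (A ^ k) := by
  induction k with
  | zero => apply LinearMap.ext; intro X; simp [lmulMap]
  | succ k ih =>
    apply LinearMap.ext; intro X
    rw [pow_succ, Module.End.mul_apply, ih]
    show A ^ k * (A * X) = A ^ (k+1) * X
    rw [← Matrix.mul_assoc, ← pow_succ]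

lemma rmulMap_pow {n q : ℕ} (B : Matrix (Fin q) (Fin q) ℂ) (k : ℕ) :
    (rmulMap B : Module.End ℂ (Matrix (Fin n) (Fin q) ℂ)) ^ k = rmulMap (B ^ k) := by
  induction k with
  | zero => apply LinearMap.ext; intro X; simp [rmulMap]
  | succ k ih =>
    apply LinearMap.ext; intro X
    rw [pow_succ, Module.End.mul_apply, ih]
    show (X * B) * B ^ k = X * B ^ (k+1)
    rw [Matrix.mul_assoc, ← pow_succ']

lemma lmulMap_zero {n q : ℕ} : (lmulMap (0 : Matrix (Fin n) (Fin n) ℂ) :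
    Matrix (Fin n) (Fin q) ℂ →ₗ[ℂ] Matrix (Fin n) (Fin q) ℂ) = 0 := by
  apply LinearMap.ext; intro X
  show (0 : Matrix (Fin n) (Fin n) ℂ) * X = 0
  rw [Matrix.zero_mul]

lemma rmulMap_zero {n q : ℕ} : (rmulMap (0 : Matrix (Fin q) (Fin q) ℂ) :
    Matrix (Fin n) (Fin q) ℂ →ₗ[ℂ] Matrix (Fin n) (Fin q) ℂ) = 0 := by
  apply LinearMap.ext; intro X
  show X * (0 : Matrix (Fin q) (Fin q) ℂ) = 0
  rw [Matrix.mul_zero]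

lemma ker_jordan_ne (l l' : ℂ) (hll : l ≠ l') (n q : ℕ) :
    LinearMap.ker (interMap (Jb l n) (Jb l' q)) = ⊥ := by
  rw [LinearMap.ker_eq_bot']
  intro X hX
  rw [show interMap (Jb l n) (Jb l' q) X = X * Jb l' q - Jb l n * X from rfl,
    sub_eq_zero] at hX
  set L : Module.End ℂ (Matrix (Fin n) (Fin q) ℂ) :=
    rmulMap (Jb 0 q) - lmulMap (Jb 0 n) with hL
  have hLX : L X = (l - l') • X := by
    rw [Jb_eq_smul_one_add l, Jb_eq_smul_one_add l'] at hX
    have h2 : X * (l' • (1 : Matrix (Fin q) (Fin q) ℂ)) + X * Jb 0 q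
        = (l • (1 : Matrix (Fin n) (Fin n) ℂ)) * X + Jb 0 n * X := by
      rw [← Matrix.mul_add, ← Matrix.add_mul]; exact hX
    rw [Matrix.mul_smul, Matrix.smul_mul, Matrix.mul_one, Matrix.one_mul] at h2
    show X * Jb 0 q - Jb 0 n * X = (l - l') • X
    rw [sub_smul, sub_eq_sub_iff_add_eq_add, add_comm (X * Jb 0 q)]
    exact h2
  have hLpow : ∀ k : ℕ, (L ^ k) X = (l - l') ^ k • X := by
    intro k
    induction k with
    | zero => simp
    | succ k ih =>
      rw [pow_succ, Module.End.mul_apply, hLX, LinearMap.map_smul, ih, smul_smul, ← pow_succ']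
  have hc0 : Commute (rmulMap (Jb 0 q) : Module.End ℂ (Matrix (Fin n) (Fin q) ℂ))
      (lmulMap (-(Jb 0 n))) := by
    apply LinearMap.ext
    intro Y
    show ((-(Jb 0 n)) * Y) * Jb 0 q = (-(Jb 0 n)) * (Y * Jb 0 q)
    rw [Matrix.mul_assoc]
  have lmulMap_neg : (lmulMap (-(Jb 0 n)) : Module.End ℂ (Matrix (Fin n) (Fin q) ℂ))
      = -(lmulMap (Jb 0 n)) := by
    apply LinearMap.ext
    intro Y
    show (-(Jb 0 n)) * Y = -(Jb 0 n * Y)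
    rw [Matrix.neg_mul]
  have hLzero : L ^ (n + q) = 0 := by
    have hLeq : L = rmulMap (Jb 0 q) + lmulMap (-(Jb 0 n)) := by
      rw [hL, lmulMap_neg]; abel
    rw [hLeq, hc0.add_pow]
    apply Finset.sum_eq_zero
    intro k hk
    by_cases hkq : q ≤ k
    · rw [rmulMap_pow, shift_pow_eq_zero hkq, rmulMap_zero, zero_mul, zero_mul]
    · have hn : n ≤ n + q - k := by omega
      have hz : (-(Jb 0 n) : Matrix (Fin n) (Fin n) ℂ) ^ (n + q - k) = 0 := by
        rw [neg_pow, shift_pow_eq_zero hn, mul_zero]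
      rw [lmulMap_pow, hz, lmulMap_zero, mul_zero, zero_mul]
  have hfin := hLpow (n + q)
  rw [hLzero] at hfin
  rw [LinearMap.zero_apply] at hfin
  have hne : (l - l') ^ (n + q) ≠ 0 := pow_ne_zero _ (sub_ne_zero.mpr hll)
  exact (smul_eq_zero.mp hfin.symm).resolve_left hne

def conjMap {n q : ℕ} (P : Matrix (Fin n) (Fin n) ℂ) (R : Matrix (Fin q) (Fin q) ℂ) :
    Matrix (Fin n) (Fin q) ℂ →ₗ[ℂ] Matrix (Fin n) (Fin q) ℂ where
  toFun X := P * X * R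
  map_add' X Y := by simp [Matrix.mul_add, Matrix.add_mul]
  map_smul' c X := by simp [Matrix.mul_smul, Matrix.smul_mul]

lemma finrank_ker_inter_conj {n q : ℕ} (A P P' : Matrix (Fin n) (Fin n) ℂ)
    (B R R' : Matrix (Fin q) (Fin q) ℂ)
    (hP : P * P' = 1) (hP' : P' * P = 1) (hR : R * R' = 1) (hR' : R' * R = 1) :
    Module.finrank ℂ ↥(LinearMap.ker (interMap (P * A * P') (R * B * R')))
      = Module.finrank ℂ ↥(LinearMap.ker (interMap A B)) := by
  have h1 : ∀ X ∈ LinearMap.ker (interMap (P * A * P') (R * B * R')),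
      (conjMap P' R) X ∈ LinearMap.ker (interMap A B) := by
    intro X hX
    rw [ker_inter_mem] at hX ⊢
    show P' * X * R * B = A * (P' * X * R)
    have e1 : X * (R * B) = P * (A * (P' * (X * R))) := by
      have e0 := congrArg (· * R) hX
      simp only [Matrix.mul_assoc] at e0 ⊢
      rw [hR', Matrix.mul_one] at e0
      exact e0
    simp only [Matrix.mul_assoc]
    rw [e1, ← Matrix.mul_assoc P' P, hP', Matrix.one_mul]
  have h2 : ∀ Y ∈ LinearMap.ker (interMap A B),
      (conjMap P R') Y ∈ LinearMap.ker (interMap (P * A * P') (R * B * R')) := by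
    intro Y hY
    rw [ker_inter_mem] at hY ⊢
    show P * Y * R' * (R * B * R') = P * A * P' * (P * Y * R')
    have e2 : R' * (R * (B * R')) = B * R' := by
      rw [← Matrix.mul_assoc, hR', Matrix.one_mul]
    have e3 : P' * (P * (Y * R')) = Y * R' := by
      rw [← Matrix.mul_assoc, hP', Matrix.one_mul]
    simp only [Matrix.mul_assoc]
    rw [e2, e3]
    have e4 : Y * (B * R') = A * (Y * R') := by
      rw [← Matrix.mul_assoc, hY, Matrix.mul_assoc]
    rw [e4]
  have e : ↥(LinearMap.ker (interMap (P * A * P') (R * B * R'))) ≃ₗ[ℂ]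
      ↥(LinearMap.ker (interMap A B)) :=
    LinearEquiv.ofLinear ((conjMap P' R).restrict h1) ((conjMap P R').restrict h2)
      (by
        apply LinearMap.ext
        intro Y
        apply Subtype.ext
        show P' * (P * (Y : Matrix (Fin n) (Fin q) ℂ) * R') * R
            = (Y : Matrix (Fin n) (Fin q) ℂ)
        simp only [Matrix.mul_assoc]
        rw [← Matrix.mul_assoc P' P, hP', Matrix.one_mul, hR', Matrix.mul_one])
      (by
        apply LinearMap.ext
        intro X
        apply Subtype.ext
        show P * (P' * (X : Matrix (Fin n) (Fin q) ℂ) * R) * R'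
            = (X : Matrix (Fin n) (Fin q) ℂ)
        simp only [Matrix.mul_assoc]
        rw [← Matrix.mul_assoc P P', hP, Matrix.one_mul, hR, Matrix.mul_one])
  exact e.finrank_eq

lemma sq_Jb {n : ℕ} (l : ℂ) :
    (Jb l n) ^ 2 = (l^2) • (1 : Matrix (Fin n) (Fin n) ℂ)
      + ((2*l) • Jb 0 n + Jb 0 n ^ 2) := by
  rw [Jb_eq_smul_one_add l, pow_two]
  simp only [Matrix.add_mul, Matrix.mul_add, Matrix.smul_mul, Matrix.mul_smul,
    Matrix.one_mul, Matrix.mul_one, smul_smul, smul_add]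
  rw [← pow_two (Jb 0 n), show l * l = l ^ 2 by ring, show (2*l) = l + l by ring, add_smul]
  abel

lemma A_apply {n : ℕ} (l : ℂ) (i j : Fin n) :
    ((2*l) • Jb 0 n + Jb 0 n ^ 2) i j =
      if (j:ℕ) = (i:ℕ) + 1 then 2*l else if (j:ℕ) = (i:ℕ) + 2 then 1 else 0 := by
  simp only [Matrix.add_apply, Matrix.smul_apply, shift_apply, shift_pow_apply,
    smul_eq_mul]
  split_ifs with h1 h2 h3 <;> first | omega | ring

lemma A_pow_entry {n : ℕ} (l : ℂ) (k : ℕ) (i j : Fin n) :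
    ((j:ℕ) < (i:ℕ) + k → (((2*l) • Jb 0 n + Jb 0 n ^ 2) ^ k) i j = 0) ∧
    ((j:ℕ) = (i:ℕ) + k → (((2*l) • Jb 0 n + Jb 0 n ^ 2) ^ k) i j = (2*l)^k) := by
  induction k generalizing i j with
  | zero =>
    constructor
    · intro h
      rw [pow_zero, Matrix.one_apply_ne (fun hc => by rw [hc] at h; omega)]
    · intro h
      rw [pow_zero, pow_zero, show j = i from Fin.ext (by omega), Matrix.one_apply_eq]
  | succ k ih =>
    constructor
    · intro h
      rw [pow_succ, Matrix.mul_apply]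
      apply Finset.sum_eq_zero
      intro t _
      rw [A_apply]
      split_ifs with h1 h2
      · rw [(ih i t).1 (by omega), zero_mul]
      · rw [(ih i t).1 (by omega), zero_mul]
      · rw [mul_zero]
    · intro h
      have hb : (i:ℕ) + k < n := by have := j.isLt; omega
      rw [pow_succ, Matrix.mul_apply]
      rw [Finset.sum_eq_single (⟨(i:ℕ)+k, hb⟩ : Fin n)]
      · rw [A_apply, (ih i _).2 (by simp only [Fin.val_mk]),
          if_pos (by simp only [Fin.val_mk]; omega), ← pow_succ]
      · intro t _ ht
        rw [A_apply]
        split_ifs with h1 h2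
        · exact absurd (Fin.ext (show (t:ℕ) = (((⟨(i:ℕ)+k, hb⟩ : Fin n)) : ℕ) by
            simp only [Fin.val_mk]; omega)) ht
        · rw [(ih i t).1 (by omega), zero_mul]
        · rw [mul_zero]
      · simp

lemma sq_similar {n : ℕ} (hn : 0 < n) (l : ℂ) (hl : l ≠ 0) :
    ∃ Q Q' : Matrix (Fin n) (Fin n) ℂ, Q * Q' = 1 ∧ Q' * Q = 1 ∧
      (Jb l n) ^ 2 = Q * Jb (l^2) n * Q' := by
  have hAn : ((2*l) • Jb 0 n + Jb 0 n ^ 2) ^ n = 0 := by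
    have hfact : (2*l) • Jb 0 n + Jb 0 n ^ 2
        = Jb 0 n * ((2*l) • (1 : Matrix (Fin n) (Fin n) ℂ) + Jb 0 n) := by
      rw [Matrix.mul_add, Matrix.mul_smul, Matrix.mul_one, ← pow_two]
    have hc : Commute (Jb 0 n) ((2*l) • (1 : Matrix (Fin n) (Fin n) ℂ) + Jb 0 n) := by
      show _ * _ = _ * _
      rw [Matrix.mul_add, Matrix.add_mul, Matrix.mul_smul, Matrix.smul_mul,
        Matrix.mul_one, Matrix.one_mul]
    rw [hfact, hc.mul_pow, shift_pow_eq_zero (le_refl n), Matrix.zero_mul]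
  set Q : Matrix (Fin n) (Fin n) ℂ :=
    Matrix.of (fun i j => ((((2*l) • Jb 0 n + Jb 0 n ^ 2)) ^ (n - 1 - (j:ℕ))) i
      ⟨n-1, by omega⟩) with hQdef
  have hQut : Q.BlockTriangular id := by
    intro i j hij
    show ((((2*l) • Jb 0 n + Jb 0 n ^ 2)) ^ (n - 1 - (j:ℕ))) i ⟨n-1, by omega⟩ = 0
    apply (A_pow_entry l _ i ⟨n-1, by omega⟩).1
    simp only [Fin.val_mk]
    have := j.isLt
    have hij' : (j:ℕ) < (i:ℕ) := hij
    omega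
  have hQdiag : ∀ i : Fin n, Q i i = (2*l) ^ (n - 1 - (i:ℕ)) := by
    intro i
    show ((((2*l) • Jb 0 n + Jb 0 n ^ 2)) ^ (n - 1 - (i:ℕ))) i ⟨n-1, by omega⟩ = _
    apply (A_pow_entry l _ i ⟨n-1, by omega⟩).2
    simp only [Fin.val_mk]
    have := i.isLt
    omega
  have hdet : IsUnit Q.det := by
    rw [Matrix.det_of_upperTriangular hQut, isUnit_iff_ne_zero]
    rw [Finset.prod_ne_zero_iff]
    intro i _
    rw [hQdiag i]
    exact pow_ne_zero _ (by simpa using hl)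
  have hQQ' : Q * Q⁻¹ = 1 := Matrix.mul_nonsing_inv Q hdet
  have hQ'Q : Q⁻¹ * Q = 1 := Matrix.nonsing_inv_mul Q hdet
  refine ⟨Q, Q⁻¹, hQQ', hQ'Q, ?_⟩
  have hAQ : ((2*l) • Jb 0 n + Jb 0 n ^ 2) * Q = Q * Jb 0 n := by
    ext i j
    have hL : (((2*l) • Jb 0 n + Jb 0 n ^ 2) * Q) i j
        = (((2*l) • Jb 0 n + Jb 0 n ^ 2) * ((2*l) • Jb 0 n + Jb 0 n ^ 2) ^ (n - 1 - (j:ℕ)))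
            i ⟨n-1, by omega⟩ := by
      rw [Matrix.mul_apply, Matrix.mul_apply]
      rfl
    rw [hL, mul_shift_apply,
      show ((2*l) • Jb 0 n + Jb 0 n ^ 2) * ((2*l) • Jb 0 n + Jb 0 n ^ 2) ^ (n - 1 - (j:ℕ))
        = ((2*l) • Jb 0 n + Jb 0 n ^ 2) ^ ((n - 1 - (j:ℕ)) + 1) from (pow_succ' _ _).symm]
    split_ifs with h
    · show _ = (((2*l) • Jb 0 n + Jb 0 n ^ 2) ^ (n - 1 - ((j:ℕ)-1))) i ⟨n-1, by omega⟩
      rw [show n - 1 - ((j:ℕ)-1) = n - 1 - (j:ℕ) + 1 from by have := j.isLt; omega]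
    · rw [show (n - 1 - (j:ℕ)) + 1 = n from by have := j.isLt; omega, hAn]
      rfl
  have hA' : ((2*l) • Jb 0 n + Jb 0 n ^ 2) = Q * Jb 0 n * Q⁻¹ := by
    rw [← hAQ, Matrix.mul_assoc, hQQ', Matrix.mul_one]
  rw [sq_Jb, hA', Jb_eq_smul_one_add (l^2), Matrix.mul_add, Matrix.add_mul,
    Matrix.mul_smul, Matrix.mul_one, Matrix.smul_mul, hQQ']

lemma sq_finrank (l : ℂ) (hl : l ≠ 0) (m p : ℕ) (hm : 0 < m) (hmp : m ≤ p) :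
    Module.finrank ℂ ↥(LinearMap.ker (interMap ((Jb l m) ^ 2) ((Jb l p) ^ 2))) = m := by
  obtain ⟨Q, Q', h1, h2, h3⟩ := sq_similar hm l hl
  obtain ⟨R, R', g1, g2, g3⟩ := sq_similar (lt_of_lt_of_le hm hmp) l hl
  rw [h3, g3, finrank_ker_inter_conj _ _ _ _ _ _ h1 h2 g1 g2]
  exact jordan_finrank (l^2) m p hm hmp

lemma finrank_ker_inter_blocks {a b c d : Type*} [Fintype a] [Fintype b] [Fintype c]
    [Fintype d] [DecidableEq a] [DecidableEq b] [DecidableEq c] [DecidableEq d]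
    (C1 : Matrix a a ℂ) (C2 : Matrix b b ℂ) (D1 : Matrix c c ℂ) (D2 : Matrix d d ℂ) :
    Module.finrank ℂ ↥(LinearMap.ker (interMap
        (Matrix.fromBlocks C1 0 0 C2) (Matrix.fromBlocks D1 0 0 D2)))
      = Module.finrank ℂ ↥(LinearMap.ker (interMap C1 D1))
        + Module.finrank ℂ ↥(LinearMap.ker (interMap C1 D2))
        + Module.finrank ℂ ↥(LinearMap.ker (interMap C2 D1))
        + Module.finrank ℂ ↥(LinearMap.ker (interMap C2 D2)) := by
  have hmem : ∀ X : Matrix (a ⊕ b) (c ⊕ d) ℂ,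
      X ∈ LinearMap.ker (interMap (Matrix.fromBlocks C1 0 0 C2)
          (Matrix.fromBlocks D1 0 0 D2)) ↔
      (X.toBlocks₁₁ ∈ LinearMap.ker (interMap C1 D1) ∧
       X.toBlocks₁₂ ∈ LinearMap.ker (interMap C1 D2) ∧
       X.toBlocks₂₁ ∈ LinearMap.ker (interMap C2 D1) ∧
       X.toBlocks₂₂ ∈ LinearMap.ker (interMap C2 D2)) := by
    intro X
    rw [ker_inter_mem, ker_inter_mem, ker_inter_mem, ker_inter_mem, ker_inter_mem]
    have h1 : X * Matrix.fromBlocks D1 0 0 D2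
        = Matrix.fromBlocks (X.toBlocks₁₁ * D1) (X.toBlocks₁₂ * D2)
            (X.toBlocks₂₁ * D1) (X.toBlocks₂₂ * D2) := by
      conv_lhs => rw [← Matrix.fromBlocks_toBlocks X]
      rw [Matrix.fromBlocks_multiply]
      simp
    have h2 : Matrix.fromBlocks C1 0 0 C2 * X
        = Matrix.fromBlocks (C1 * X.toBlocks₁₁) (C1 * X.toBlocks₁₂)
            (C2 * X.toBlocks₂₁) (C2 * X.toBlocks₂₂) := by
      conv_lhs => rw [← Matrix.fromBlocks_toBlocks X]
      rw [Matrix.fromBlocks_multiply]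
      simp
    rw [h1, h2, Matrix.fromBlocks_inj]
  let e : ↥(LinearMap.ker (interMap (Matrix.fromBlocks C1 0 0 C2)
        (Matrix.fromBlocks D1 0 0 D2))) ≃ₗ[ℂ]
      (↥(LinearMap.ker (interMap C1 D1)) × ↥(LinearMap.ker (interMap C1 D2)) ×
       ↥(LinearMap.ker (interMap C2 D1)) × ↥(LinearMap.ker (interMap C2 D2))) :=
    { toFun := fun X => (⟨X.1.toBlocks₁₁, ((hmem X.1).mp X.2).1⟩,
        ⟨X.1.toBlocks₁₂, ((hmem X.1).mp X.2).2.1⟩,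
        ⟨X.1.toBlocks₂₁, ((hmem X.1).mp X.2).2.2.1⟩,
        ⟨X.1.toBlocks₂₂, ((hmem X.1).mp X.2).2.2.2⟩)
      invFun := fun Y => ⟨Matrix.fromBlocks Y.1 Y.2.1 Y.2.2.1 Y.2.2.2, (hmem _).mpr (by
        rw [Matrix.toBlocks_fromBlocks₁₁, Matrix.toBlocks_fromBlocks₁₂,
          Matrix.toBlocks_fromBlocks₂₁, Matrix.toBlocks_fromBlocks₂₂]
        exact ⟨Y.1.2, Y.2.1.2, Y.2.2.1.2, Y.2.2.2.2⟩)⟩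
      map_add' := fun X Y => rfl
      map_smul' := fun c X => rfl
      left_inv := fun X => Subtype.ext (Matrix.fromBlocks_toBlocks X.1)
      right_inv := fun Y => by
        refine Prod.ext (Subtype.ext ?_) (Prod.ext (Subtype.ext ?_)
          (Prod.ext (Subtype.ext ?_) (Subtype.ext ?_)))
        · exact Matrix.toBlocks_fromBlocks₁₁ _ _ _ _
        · exact Matrix.toBlocks_fromBlocks₁₂ _ _ _ _
        · exact Matrix.toBlocks_fromBlocks₂₁ _ _ _ _
        · exact Matrix.toBlocks_fromBlocks₂₂ _ _ _ _ }
  rw [e.finrank_eq, Module.finrank_prod, Module.finrank_prod, Module.finrank_prod]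
  ring

lemma finrank_ker_inter_reindex {a b c d : Type*} [Fintype a] [Fintype b] [Fintype c]
    [Fintype d] [DecidableEq a] [DecidableEq b] [DecidableEq c] [DecidableEq d]
    (eC : a ≃ b) (eD : c ≃ d) (C : Matrix a a ℂ) (D : Matrix c c ℂ) :
    Module.finrank ℂ ↥(LinearMap.ker (interMap
        (Matrix.reindex eC eC C) (Matrix.reindex eD eD D)))
      = Module.finrank ℂ ↥(LinearMap.ker (interMap C D)) := by
  have hC : (Matrix.reindex eC eC C).submatrix eC eC = C := by
    rw [Matrix.reindex_apply, Matrix.submatrix_submatrix, Equiv.symm_comp_self,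
      Matrix.submatrix_id_id]
  have hD : (Matrix.reindex eD eD D).submatrix eD eD = D := by
    rw [Matrix.reindex_apply, Matrix.submatrix_submatrix, Equiv.symm_comp_self,
      Matrix.submatrix_id_id]
  have hsub_inj : ∀ (M N : Matrix b d ℂ),
      M.submatrix eC eD = N.submatrix eC eD → M = N := by
    intro M N h
    ext i j
    have := congrFun (congrFun h (eC.symm i)) (eD.symm j)
    simpa using this
  have hmem : ∀ X : Matrix b d ℂ,
      X ∈ LinearMap.ker (interMap (Matrix.reindex eC eC C) (Matrix.reindex eD eD D)) ↔
      X.submatrix eC eD ∈ LinearMap.ker (interMap C D) := by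
    intro X
    rw [ker_inter_mem, ker_inter_mem]
    have key1 : X.submatrix eC eD * D
        = (X * Matrix.reindex eD eD D).submatrix eC eD := by
      conv_lhs => rw [← hD]
      rw [Matrix.submatrix_mul_equiv]
    have key2 : C * X.submatrix eC eD
        = (Matrix.reindex eC eC C * X).submatrix eC eD := by
      conv_lhs => rw [← hC]
      rw [Matrix.submatrix_mul_equiv]
    rw [key1, key2]
    constructor
    · intro h; rw [h]
    · intro h; exact hsub_inj _ _ h
  have e : ↥(LinearMap.ker (interMap (Matrix.reindex eC eC C) (Matrix.reindex eD eD D)))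
      ≃ₗ[ℂ] ↥(LinearMap.ker (interMap C D)) :=
    { toFun := fun X => ⟨X.1.submatrix eC eD, (hmem X.1).mp X.2⟩
      invFun := fun Y => ⟨Y.1.submatrix eC.symm eD.symm, by
        apply (hmem _).mpr
        rw [Matrix.submatrix_submatrix, Equiv.symm_comp_self, Equiv.symm_comp_self,
          Matrix.submatrix_id_id]
        exact Y.2⟩
      map_add' := fun X Y => rfl
      map_smul' := fun cc X => rfl
      left_inv := fun X => Subtype.ext (by
        show (X.1.submatrix ⇑eC ⇑eD).submatrix ⇑eC.symm ⇑eD.symm = X.1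
        rw [Matrix.submatrix_submatrix, Equiv.self_comp_symm, Equiv.self_comp_symm,
          Matrix.submatrix_id_id])
      right_inv := fun Y => Subtype.ext (by
        show (Y.1.submatrix ⇑eC.symm ⇑eD.symm).submatrix ⇑eC ⇑eD = Y.1
        rw [Matrix.submatrix_submatrix, Equiv.symm_comp_self, Equiv.symm_comp_self,
          Matrix.submatrix_id_id]) }
  exact e.finrank_eq

lemma Jb_map_conj {n : ℕ} (l : ℂ) :
    (Jb l n).map (starRingEnd ℂ) = Jb (starRingEnd ℂ l) n := by
  ext i j
  simp only [Matrix.map_apply, Jb, Matrix.of_apply]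
  split_ifs
  · rfl
  · exact map_one _
  · exact map_zero _

lemma Mb_reindex (l : ℂ) (him : l.im ≠ 0) (k : ℕ) (e : Fin k ⊕ Fin k ≃ Fin (sz l k))
    (he : ∀ x : Fin k ⊕ Fin k,
      ((e x : Fin (sz l k)) : ℕ)
        = Sum.elim (fun i : Fin k => (i : ℕ)) (fun i : Fin k => k + (i : ℕ)) x) :
    Mb l k = Matrix.reindex e e (Matrix.fromBlocks 0 (Jb (l^2) k) 1 0) := by
  have hsub : (Mb l k).submatrix e e = Matrix.fromBlocks 0 (Jb (l^2) k) 1 0 := by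
    ext x y
    rcases x with i | i <;> rcases y with j | j <;>
      simp only [Matrix.submatrix_apply, Mb, Jb, Matrix.of_apply, him, if_false, he,
        Sum.elim_inl, Sum.elim_inr, Matrix.fromBlocks_apply₁₁, Matrix.fromBlocks_apply₁₂,
        Matrix.fromBlocks_apply₂₁, Matrix.fromBlocks_apply₂₂, Matrix.zero_apply,
        Matrix.one_apply] <;>
      have hi := i.isLt <;> have hj := j.isLt
    · rw [if_neg (by omega), if_neg (by omega)]
    · rw [if_pos (by omega)]
      split_ifs with h1 h2 h3 h4 h5 <;> first | rfl | (exfalso; omega)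
    · rw [if_neg (by omega)]
      split_ifs with h1 h2 h3
      · rfl
      · exact absurd (Fin.ext (by omega : (i:ℕ) = (j:ℕ))) h2
      · exfalso
        have : (i:ℕ) = (j:ℕ) := congrArg Fin.val h3
        omega
      · rfl
    · rw [if_neg (by omega), if_neg (by omega)]
  rw [← hsub, Matrix.reindex_apply, Matrix.submatrix_submatrix, Equiv.self_comp_symm,
    Matrix.submatrix_id_id]

lemma Mb_conj_mul (l : ℂ) (him : l.im ≠ 0) (k : ℕ) (e : Fin k ⊕ Fin k ≃ Fin (sz l k))
    (he : ∀ x : Fin k ⊕ Fin k,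
      ((e x : Fin (sz l k)) : ℕ)
        = Sum.elim (fun i : Fin k => (i : ℕ)) (fun i : Fin k => k + (i : ℕ)) x) :
    (Mb l k).map (starRingEnd ℂ) * Mb l k
      = Matrix.reindex e e
          (Matrix.fromBlocks (Jb (starRingEnd ℂ (l^2)) k) 0 0 (Jb (l^2) k)) := by
  rw [Mb_reindex l him k e he]
  rw [Matrix.reindex_apply, ← Matrix.submatrix_map, Matrix.submatrix_mul_equiv
    _ _ _ e.symm _]
  congr 1
  rw [Matrix.fromBlocks_map, Matrix.fromBlocks_multiply, Jb_map_conj]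
  simp only [Matrix.map_zero _ (map_zero (starRingEnd ℂ)),
    Matrix.map_one _ (map_zero (starRingEnd ℂ)) (map_one (starRingEnd ℂ)),
    Matrix.mul_zero, Matrix.zero_mul, Matrix.mul_one, Matrix.one_mul,
    zero_add, add_zero]
  exact Matrix.ext fun i j => by rcases i with i | i <;> rcases j with j | j <;> rfl

/-- Dimension of the space of matrices `X` with
`X·conj(M_{λ,p})·M_{λ,p} = conj(M_{λ,m})·M_{λ,m}·X`, for a nonzero normalized `λ`
and `m ≤ p`. -/
theorem stmt3 (l : ℂ) (hl0 : l ≠ 0) (hl : Normalized l) (m p : ℕ)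
    (hm : 0 < m) (hmp : m ≤ p) :
    ((l.im = 0 ∧ 0 < l.re) →
      Module.finrank ℂ ↥(LinearMap.ker (interMap
        ((Mb l m).map (starRingEnd ℂ) * Mb l m)
        ((Mb l p).map (starRingEnd ℂ) * Mb l p))) = m) ∧
    ((l ^ 2).im ≠ 0 →
      Module.finrank ℂ ↥(LinearMap.ker (interMap
        ((Mb l m).map (starRingEnd ℂ) * Mb l m)
        ((Mb l p).map (starRingEnd ℂ) * Mb l p))) = 2 * m) ∧
    (((l ^ 2).im = 0 ∧ (l ^ 2).re < 0) →
      Module.finrank ℂ ↥(LinearMap.ker (interMap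
        ((Mb l m).map (starRingEnd ℂ) * Mb l m)
        ((Mb l p).map (starRingEnd ℂ) * Mb l p))) = 4 * m) := by
  have him_of2 : (l ^ 2).im = 2 * l.re * l.im := by
    rw [pow_two, Complex.mul_im]; ring
  have hre_of2 : (l ^ 2).re = l.re * l.re - l.im * l.im := by
    rw [pow_two, Complex.mul_re]
  have hblocks : ∀ him : l.im ≠ 0,
      Module.finrank ℂ ↥(LinearMap.ker (interMap
        ((Mb l m).map (starRingEnd ℂ) * Mb l m)
        ((Mb l p).map (starRingEnd ℂ) * Mb l p)))
      = Module.finrank ℂ ↥(LinearMap.ker (interMap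
          (Jb (starRingEnd ℂ (l ^ 2)) m) (Jb (starRingEnd ℂ (l ^ 2)) p)))
        + Module.finrank ℂ ↥(LinearMap.ker (interMap
          (Jb (starRingEnd ℂ (l ^ 2)) m) (Jb (l ^ 2) p)))
        + Module.finrank ℂ ↥(LinearMap.ker (interMap
          (Jb (l ^ 2) m) (Jb (starRingEnd ℂ (l ^ 2)) p)))
        + Module.finrank ℂ ↥(LinearMap.ker (interMap
          (Jb (l ^ 2) m) (Jb (l ^ 2) p))) := by
    intro him
    have hszm : m + m = sz l m := by simp [sz, him]; ring
    have hszp : p + p = sz l p := by simp [sz, him]; ring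
    let em : Fin m ⊕ Fin m ≃ Fin (sz l m) := finSumFinEquiv.trans (finCongr hszm)
    let ep : Fin p ⊕ Fin p ≃ Fin (sz l p) := finSumFinEquiv.trans (finCongr hszp)
    have hem : ∀ x : Fin m ⊕ Fin m,
        ((em x : Fin (sz l m)) : ℕ)
          = Sum.elim (fun i : Fin m => (i : ℕ)) (fun i : Fin m => m + (i : ℕ)) x := by
      rintro (i | i) <;> (simp [em]; try omega)
    have hep : ∀ x : Fin p ⊕ Fin p,
        ((ep x : Fin (sz l p)) : ℕ)
          = Sum.elim (fun i : Fin p => (i : ℕ)) (fun i : Fin p => p + (i : ℕ)) x := by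
      rintro (i | i) <;> (simp [ep]; try omega)
    rw [Mb_conj_mul l him m em hem, Mb_conj_mul l him p ep hep,
      finrank_ker_inter_reindex, finrank_ker_inter_blocks]
  refine ⟨?_, ?_, ?_⟩
  · rintro ⟨him, _⟩
    have hMb : ∀ k : ℕ,
        (Mb l k).map (starRingEnd ℂ) * Mb l k = (Jb l (sz l k)) ^ 2 := by
      intro k
      have h1 : Mb l k = Jb l (sz l k) := by
        ext i j
        simp [Mb, Jb, him]
      have h2 : (Jb l (sz l k)).map (starRingEnd ℂ) = Jb l (sz l k) := by
        rw [Jb_map_conj, Complex.conj_eq_iff_im.mpr him]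
      rw [h1, h2, pow_two]
    rw [hMb m, hMb p]
    have h1 : sz l m = m := by simp [sz, him]
    have h2 : sz l p = p := by simp [sz, him]
    rw [sq_finrank l hl0 (sz l m) (sz l p) (by omega) (by omega)]
    exact h1
  · intro him2
    have him : l.im ≠ 0 := by
      intro h
      rw [him_of2, h] at him2
      simp at him2
    have hne : (starRingEnd ℂ) (l ^ 2) ≠ l ^ 2 := by
      intro hcc
      exact him2 (Complex.conj_eq_iff_im.mp hcc)
    rw [hblocks him, ker_jordan_ne _ _ hne m p, ker_jordan_ne _ _ (Ne.symm hne) m p,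
      jordan_finrank ((starRingEnd ℂ) (l ^ 2)) m p hm hmp,
      jordan_finrank (l ^ 2) m p hm hmp,
      finrank_bot ℂ (Matrix (Fin m) (Fin p) ℂ)]
    omega
  · rintro ⟨him2, hre2⟩
    have him : l.im ≠ 0 := by
      intro h
      rw [hre_of2, h] at hre2
      nlinarith [mul_self_nonneg l.re]
    have hconj : (starRingEnd ℂ) (l ^ 2) = l ^ 2 := Complex.conj_eq_iff_im.mpr him2
    rw [hblocks him, hconj, jordan_finrank (l ^ 2) m p hm hmp]
    omega
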